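/- arXiv:2403.15125 — 7 statements merged into one kernel-verified Lean document; each statement's English description precedes it below -/
import Mathlib

section
/- Green's formula: let b be a weighted graph over the discrete measure space (X,m) with m: X → (0,∞), and let ℒf(x) = (1/m(x)) Σ_y b(x,y)(f(x)-f(y)) be the formal Laplacian. If f: X → ℝ has finite energy Q(f) < ∞ and φ: X → ℝ has finite support, then Σ_y b(x,y)|f(y)| < ∞ for all x, and Q(f,φ) = Σ_x (ℒf)(x) φ(x) m(x), where Q(f,φ) = (1/2) Σ_{x,y} b(x,y)(f(x)-f(y))(φ(x)-φ(y)). -/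
open Filter Topology
open scoped ENNReal

variable {X : Type*}

/-- The graph energy functional `Q(f) = (1/2) Σ_{x,y} b(x,y)(f(x)-f(y))²`, valued in `[0,∞]`. -/
noncomputable def graphEnergy (b : X → X → ℝ) (f : X → ℝ) : ℝ≥0∞ :=
  (1 / 2 : ℝ≥0∞) * ∑' p : X × X, ENNReal.ofReal (b p.1 p.2 * (f p.1 - f p.2) ^ 2)

/-- The bilinear graph energy form `Q(f,g)`. -/
noncomputable def energyBil (b : X → X → ℝ) (f g : X → ℝ) : ℝ :=
  (1 / 2 : ℝ) * ∑' p : X × X, b p.1 p.2 * (f p.1 - f p.2) * (g p.1 - g p.2)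

/-- The formal graph Laplacian `ℒ f(x) = (1/m(x)) Σ_y b(x,y)(f(x)-f(y))`. -/
noncomputable def formalLap (b : X → X → ℝ) (m : X → ℝ) (f : X → ℝ) (x : X) : ℝ :=
  (∑' y, b x y * (f x - f y)) / m x

/-- Membership in `D₀`: approximability by finitely supported functions pointwise and in energy. -/
def MemD0 (b : X → X → ℝ) (u : X → ℝ) : Prop :=
  ∃ g : ℕ → X → ℝ, (∀ n, (Function.support (g n)).Finite) ∧
    (∀ x, Tendsto (fun n => g n x) atTop (𝓝 (u x))) ∧
    Tendsto (fun n => graphEnergy b (u - g n)) atTop (𝓝 0)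

/-- `Φ(s) = ∫₀^s 2φ(t) dt`. -/
noncomputable def PhiFn (φ : ℝ → ℝ) (s : ℝ) : ℝ := ∫ t in (0:ℝ)..s, 2 * φ t

/-- `κ_f(u) = Σ_x Φ(f(x) - W(x)u(x)) m(x)/W(x)`. -/
noncomputable def kappa (φ : ℝ → ℝ) (W m : X → ℝ) (f u : X → ℝ) : ℝ≥0∞ :=
  ∑' x, ENNReal.ofReal (PhiFn φ (f x - W x * u x) * (m x / W x))

/-- The functional `E_f(u) = Q₀(u) + κ_f(u)`. -/
noncomputable def Efun (b : X → X → ℝ) (m : X → ℝ) (φ : ℝ → ℝ) (W : X → ℝ)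
    (f u : X → ℝ) : ℝ≥0∞ :=
  graphEnergy b u + kappa φ W m f u

/-- The domain of `E_f`: functions in `D₀` with `κ_f(u) < ∞`. -/
def EDom (b : X → X → ℝ) (m : X → ℝ) (φ : ℝ → ℝ) (W : X → ℝ) (f u : X → ℝ) : Prop :=
  MemD0 b u ∧ kappa φ W m f u ≠ ⊤

/-- `u` is a minimizer of `E_f` over its domain. -/
def Minimizes (b : X → X → ℝ) (m : X → ℝ) (φ : ℝ → ℝ) (W : X → ℝ) (f u : X → ℝ) : Prop :=
  EDom b m φ W f u ∧ ∀ v, EDom b m φ W f v → Efun b m φ W f u ≤ Efun b m φ W f v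

/-- The extended Dirichlet resolvent `Rh(x) = sup {Rg(x) : g ∈ C_c(X), 0 ≤ g ≤ h}`,
where for finitely supported `g` the resolvent `Rg` is the minimizer of `E_g`. -/
noncomputable def extRes (b : X → X → ℝ) (m : X → ℝ) (φ : ℝ → ℝ) (W : X → ℝ)
    (h : X → ℝ) (x : X) : ℝ≥0∞ :=
  ⨆ (g : X → ℝ) (_ : (Function.support g).Finite ∧ 0 ≤ g ∧ g ≤ h)
    (u : X → ℝ) (_ : Minimizes b m φ W g u), ENNReal.ofReal (u x)

/-- `g` is a nonnegative supersolution of `φ⁻¹(ℒg) + Wg ≥ h` in `F_φ`. -/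
def Supersol (b : X → X → ℝ) (m : X → ℝ) (φ : ℝ → ℝ) (W : X → ℝ) (h g : X → ℝ) : Prop :=
  0 ≤ g ∧ (∀ x, Summable fun y => b x y * |g y|) ∧
    (∀ x, formalLap b m g x ∈ Set.range φ) ∧
    ∀ x, h x ≤ Function.invFun φ (formalLap b m g x) + W x * g x


lemma slice_sq_summable (b : X → X → ℝ) (hnn : ∀ x y, 0 ≤ b x y)
    (f : X → ℝ) (hf : graphEnergy b f ≠ ⊤) (x : X) :
    Summable fun y => b x y * (f x - f y) ^ 2 := by
  have htot : (∑' p : X × X, ENNReal.ofReal (b p.1 p.2 * (f p.1 - f p.2) ^ 2)) ≠ ⊤ := by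
    intro h
    apply hf
    rw [graphEnergy, h, ENNReal.mul_top (by norm_num)]
  have hle : (∑' y, ENNReal.ofReal (b x y * (f x - f y) ^ 2)) ≤
      ∑' p : X × X, ENNReal.ofReal (b p.1 p.2 * (f p.1 - f p.2) ^ 2) := by
    exact ENNReal.tsum_comp_le_tsum_of_injective
      (f := fun y => ((x, y) : X × X)) (fun a b h => by simpa using h) _
  have hs := ENNReal.summable_toReal (lt_of_le_of_lt hle htot.lt_top).ne
  convert hs using 2 with y
  rw [ENNReal.toReal_ofReal (mul_nonneg (hnn x y) (sq_nonneg _))]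

lemma slice_abs_summable (b : X → X → ℝ) (hnn : ∀ x y, 0 ≤ b x y)
    (hdeg : ∀ x, Summable fun y => b x y)
    (f : X → ℝ) (hf : graphEnergy b f ≠ ⊤) (x : X) :
    Summable fun y => b x y * |f x - f y| := by
  apply Summable.of_nonneg_of_le (fun y => mul_nonneg (hnn x y) (abs_nonneg _))
    (fun y => ?_) (((hdeg x).add (slice_sq_summable b hnn f hf x)).div_const 2)
  have h2 : 2 * (b x y * |f x - f y|) ≤ b x y + b x y * (f x - f y) ^ 2 := by
    nlinarith [sq_nonneg (1 - |f x - f y|), hnn x y, sq_abs (f x - f y), abs_nonneg (f x - f y)]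
  linarith

theorem greens_formula [Countable X] (b : X → X → ℝ)
    (hsym : ∀ x y, b x y = b y x) (hnn : ∀ x y, 0 ≤ b x y) (hdiag : ∀ x, b x x = 0)
    (hdeg : ∀ x, Summable fun y => b x y) (m : X → ℝ) (hm : ∀ x, 0 < m x)
    (f : X → ℝ) (hf : graphEnergy b f ≠ ⊤)
    (ψ : X → ℝ) (hψ : (Function.support ψ).Finite) :
    (∀ x, Summable fun y => b x y * |f y|) ∧
      energyBil b f ψ = ∑' x, formalLap b m f x * ψ x * m x := by
  have habs := slice_abs_summable b hnn hdeg f hf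
  constructor
  · intro x
    apply Summable.of_nonneg_of_le (fun y => mul_nonneg (hnn x y) (abs_nonneg _))
      (fun y => ?_) (((hdeg x).mul_right |f x|).add (habs x))
    have : |f y| ≤ |f x| + |f x - f y| := by
      have := abs_sub_abs_le_abs_sub (f y) (f x)
      rw [abs_sub_comm] at this
      linarith
    nlinarith [hnn x y, abs_nonneg (f x - f y)]
  -- summability of the key function F
  set F : X × X → ℝ := fun p => b p.1 p.2 * (f p.1 - f p.2) * ψ p.1 with hF
  have hFabs : Summable fun p : X × X => |F p| := by
    rw [summable_prod_of_nonneg (fun p => abs_nonneg _)]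
    constructor
    · intro x
      have : (fun y => |F (x, y)|) = fun y => (b x y * |f x - f y|) * |ψ x| := by
        funext y
        simp only [hF, abs_mul, abs_of_nonneg (hnn x y)]
      rw [this]
      exact (habs x).mul_right _
    · apply summable_of_ne_finset_zero (s := hψ.toFinset)
      intro x hx
      have hψx : ψ x = 0 := by
        by_contra h
        exact hx (hψ.mem_toFinset.mpr h)
      simp [hF, hψx]
  have hFs : Summable F := summable_abs_iff.mp hFabs
  -- slice summability of y ↦ b x y * (f x - f y)
  have hslice : ∀ x, Summable fun y => b x y * (f x - f y) := by
    intro x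
    apply summable_abs_iff.mp
    have : (fun y => |b x y * (f x - f y)|) = fun y => b x y * |f x - f y| := by
      funext y; rw [abs_mul, abs_of_nonneg (hnn x y)]
    rw [this]; exact habs x
  -- G and its relation to F via swap
  set G : X × X → ℝ := fun p => b p.1 p.2 * (f p.1 - f p.2) * ψ p.2 with hG
  have hswap : ∀ p : X × X, G ((Equiv.prodComm X X) p) = -F p := by
    rintro ⟨x, y⟩
    simp only [hG, hF, Equiv.prodComm_apply, Prod.swap]
    rw [hsym y x]; ring
  have hGs : Summable G := by
    rw [← (Equiv.prodComm X X).summable_iff]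
    have : (G ∘ (Equiv.prodComm X X)) = fun p => -F p := funext hswap
    rw [this]
    exact hFs.neg
  have hGsum : ∑' p : X × X, G p = -∑' p, F p := by
    rw [← (Equiv.prodComm X X).tsum_eq G]
    calc ∑' p, G ((Equiv.prodComm X X) p) = ∑' p, -F p := tsum_congr hswap
    _ = -∑' p, F p := tsum_neg
  -- split the energy bilinear form
  have hsplit : energyBil b f ψ = ∑' p, F p := by
    rw [energyBil]
    have : (fun p : X × X => b p.1 p.2 * (f p.1 - f p.2) * (ψ p.1 - ψ p.2))
        = fun p => F p - G p := by
      funext p; simp only [hF, hG]; ring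
    rw [this, Summable.tsum_sub hFs hGs, hGsum]
    ring
  rw [hsplit, Summable.tsum_prod' hFs fun x => hFs.prod_factor x]
  apply tsum_congr
  intro x
  have h1 : ∑' y, F (x, y) = (∑' y, b x y * (f x - f y)) * ψ x := by
    rw [← tsum_mul_right]
  rw [h1, formalLap, div_mul_eq_mul_div, div_mul_eq_mul_div, mul_div_assoc, div_self (hm x).ne', mul_one]
end

section
/- Comparison principle I: Let b be a weighted graph over (X,m), ℒ the formal Laplacian, φ: ℝ → ℝ continuous and strictly increasing with φ(0)=0, and W: X → (0,∞). Suppose u, v: X → ℝ are in the domain F of ℒ with ℒu(x), ℒv(x) ∈ range(φ) for all x, and U ⊆ X is such that: (a) φ⁻¹(ℒu) + W u ≥ φ⁻¹(ℒv) + W v on U; (b) u − v attains a minimum on U; (c) u ≥ v on X \ U. Then u ≥ v on all of X. -/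
open Filter Topology
open scoped ENNReal

variable {X : Type*}

theorem comparison_principle_I [Countable X] (b : X → X → ℝ)
    (hsym : ∀ x y, b x y = b y x) (hnn : ∀ x y, 0 ≤ b x y) (hdiag : ∀ x, b x x = 0)
    (hdeg : ∀ x, Summable fun y => b x y) (m : X → ℝ) (hm : ∀ x, 0 < m x)
    (φ : ℝ → ℝ) (hφm : StrictMono φ) (hφc : Continuous φ) (hφ0 : φ 0 = 0)
    (W : X → ℝ) (hW : ∀ x, 0 < W x)
    (u v : X → ℝ)
    (hu : ∀ x, Summable fun y => b x y * |u y|)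
    (hv : ∀ x, Summable fun y => b x y * |v y|)
    (huφ : ∀ x, formalLap b m u x ∈ Set.range φ)
    (hvφ : ∀ x, formalLap b m v x ∈ Set.range φ)
    (U : Set X)
    (ha : ∀ x ∈ U, Function.invFun φ (formalLap b m v x) + W x * v x ≤
      Function.invFun φ (formalLap b m u x) + W x * u x)
    (hb : ∃ x₀ ∈ U, ∀ y ∈ U, u x₀ - v x₀ ≤ u y - v y)
    (hc : ∀ x ∉ U, v x ≤ u x) :
    ∀ x, v x ≤ u x := by
  obtain ⟨x₀, hx₀U, hmin⟩ := hb
  -- summability helpers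
  have hsu : ∀ x, Summable fun y => b x y * u y := by
    intro x
    refine Summable.of_abs ?_
    refine (hu x).congr fun y => ?_
    rw [abs_mul, abs_of_nonneg (hnn x y)]
  have hsv : ∀ x, Summable fun y => b x y * v y := by
    intro x
    refine Summable.of_abs ?_
    refine (hv x).congr fun y => ?_
    rw [abs_mul, abs_of_nonneg (hnn x y)]
  have hSu : ∀ x, Summable fun y => b x y * (u x - u y) := by
    intro x
    have := ((hdeg x).mul_right (u x)).sub (hsu x)
    refine this.congr fun y => ?_; ring
  have hSv : ∀ x, Summable fun y => b x y * (v x - v y) := by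
    intro x
    have := ((hdeg x).mul_right (v x)).sub (hsv x)
    refine this.congr fun y => ?_; ring
  -- key claim: 0 ≤ u x₀ - v x₀
  have key : 0 ≤ u x₀ - v x₀ := by
    by_contra hneg
    push_neg at hneg
    have hglob : ∀ y, u x₀ - v x₀ ≤ u y - v y := by
      intro y
      by_cases hy : y ∈ U
      · exact hmin y hy
      · have := hc y hy; linarith
    -- Laplacian comparison at x₀
    have hLap : formalLap b m u x₀ ≤ formalLap b m v x₀ := by
      unfold formalLap
      rw [div_le_div_iff_of_pos_right (hm x₀)]
      refine Summable.tsum_le_tsum (fun y => ?_) (hSu x₀) (hSv x₀)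
      have h1 := hglob y
      have h2 := hnn x₀ y
      nlinarith
    obtain ⟨a, haa⟩ := huφ x₀
    obtain ⟨c, hcc⟩ := hvφ x₀
    have hinv : ∀ t, Function.invFun φ (φ t) = t :=
      Function.leftInverse_invFun hφm.injective
    have hac : a ≤ c := by
      rw [← hφm.le_iff_le, haa, hcc]; exact hLap
    have := ha x₀ hx₀U
    rw [← haa, ← hcc, hinv, hinv] at this
    have hW0 := hW x₀
    nlinarith
  intro x
  by_cases hx : x ∈ U
  · have := hmin x hx; linarith
  · exact hc x hx
end

section
/- Comparison principle II: With ℒ, φ, W as in the semi-linear setting and ψ: ℝ → ℝ strictly increasing continuous with ψ(0)=0 and ψ(t) ≤ φ(t) for all t ≥ 0, and V: X → (0,∞) with V ≥ W pointwise: if u ∈ F_φ, v ∈ F_ψ, and U ⊆ X satisfy (a) φ⁻¹(ℒu) + W u ≥ ψ⁻¹(ℒv) + V v on U, (b) u − v attains a minimum on U, (c) u ≥ v on X \ U, and (d) ℒv ≥ 0 and v ≥ 0 on U, then u ≥ v on X. -/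
open Filter Topology
open scoped ENNReal

variable {X : Type*}

theorem comparison_principle_II [Countable X] (b : X → X → ℝ)
    (hsym : ∀ x y, b x y = b y x) (hnn : ∀ x y, 0 ≤ b x y) (hdiag : ∀ x, b x x = 0)
    (hdeg : ∀ x, Summable fun y => b x y) (m : X → ℝ) (hm : ∀ x, 0 < m x)
    (φ : ℝ → ℝ) (hφm : StrictMono φ) (hφc : Continuous φ) (hφ0 : φ 0 = 0)
    (ψ : ℝ → ℝ) (hψm : StrictMono ψ) (hψc : Continuous ψ) (hψ0 : ψ 0 = 0)
    (hψφ : ∀ t : ℝ, 0 ≤ t → ψ t ≤ φ t)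
    (W V : X → ℝ) (hW : ∀ x, 0 < W x) (hV : ∀ x, 0 < V x) (hVW : ∀ x, W x ≤ V x)
    (u v : X → ℝ)
    (hu : ∀ x, Summable fun y => b x y * |u y|)
    (hv : ∀ x, Summable fun y => b x y * |v y|)
    (huφ : ∀ x, formalLap b m u x ∈ Set.range φ)
    (hvψ : ∀ x, formalLap b m v x ∈ Set.range ψ)
    (U : Set X)
    (ha : ∀ x ∈ U, Function.invFun ψ (formalLap b m v x) + V x * v x ≤
      Function.invFun φ (formalLap b m u x) + W x * u x)
    (hb : ∃ x₀ ∈ U, ∀ y ∈ U, u x₀ - v x₀ ≤ u y - v y)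
    (hc : ∀ x ∉ U, v x ≤ u x)
    (hd : ∀ x ∈ U, 0 ≤ formalLap b m v x ∧ 0 ≤ v x) :
    ∀ x, v x ≤ u x := by
  -- summability helpers
  have hsumu : ∀ x, Summable fun y => b x y * (u x - u y) := by
    intro x
    have h1 : Summable fun y => b x y * u x := (hdeg x).mul_right _
    have h2 : Summable fun y => b x y * u y := by
      refine Summable.of_abs ?_
      have := hu x
      refine this.congr fun y => ?_
      rw [abs_mul, abs_of_nonneg (hnn x y)]
    simpa [mul_sub] using h1.sub h2
  have hsumv : ∀ x, Summable fun y => b x y * (v x - v y) := by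
    intro x
    have h1 : Summable fun y => b x y * v x := (hdeg x).mul_right _
    have h2 : Summable fun y => b x y * v y := by
      refine Summable.of_abs ?_
      have := hv x
      refine this.congr fun y => ?_
      rw [abs_mul, abs_of_nonneg (hnn x y)]
    simpa [mul_sub] using h1.sub h2
  obtain ⟨x₀, hx₀U, hmin⟩ := hb
  have key : v x₀ ≤ u x₀ := by
    by_contra hlt
    push_neg at hlt
    -- ℒu(x₀) ≤ ℒv(x₀)
    have hterm : ∀ y, b x₀ y * (u x₀ - u y) - b x₀ y * (v x₀ - v y) ≤ 0 := by
      intro y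
      have h : u x₀ - v x₀ ≤ u y - v y := by
        by_cases hy : y ∈ U
        · exact hmin y hy
        · have := hc y hy
          nlinarith
      nlinarith [hnn x₀ y]
    have hLuv : formalLap b m u x₀ ≤ formalLap b m v x₀ := by
      have hts : (∑' y, b x₀ y * (u x₀ - u y)) ≤ ∑' y, b x₀ y * (v x₀ - v y) := by
        refine Summable.tsum_le_tsum (fun y => by linarith [hterm y]) (hsumu x₀) (hsumv x₀)
      exact div_le_div_of_nonneg_right hts (hm x₀).le |>.trans_eq rfl
    obtain ⟨a, haφ⟩ := huφ x₀
    obtain ⟨c, hcψ⟩ := hvψ x₀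
    have hiu : Function.invFun φ (formalLap b m u x₀) = a := by
      rw [← haφ]; exact Function.leftInverse_invFun hφm.injective a
    have hiv : Function.invFun ψ (formalLap b m v x₀) = c := by
      rw [← hcψ]; exact Function.leftInverse_invFun hψm.injective c
    have hd₀ := hd x₀ hx₀U
    have hc0 : 0 ≤ c := by
      have : ψ 0 ≤ ψ c := by rw [hψ0, hcψ]; exact hd₀.1
      exact (hψm.le_iff_le).mp this
    have hWV : W x₀ * u x₀ < V x₀ * v x₀ := by
      have h1 : W x₀ * u x₀ < W x₀ * v x₀ := by
        exact mul_lt_mul_of_pos_left hlt (hW x₀)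
      have h2 : W x₀ * v x₀ ≤ V x₀ * v x₀ :=
        mul_le_mul_of_nonneg_right (hVW x₀) hd₀.2
      linarith
    have hca : c < a := by
      have := ha x₀ hx₀U
      rw [hiu, hiv] at this
      linarith
    have : φ a ≤ φ c := by
      rw [haφ]
      calc formalLap b m u x₀ ≤ formalLap b m v x₀ := hLuv
        _ = ψ c := hcψ.symm
        _ ≤ φ c := hψφ c hc0
    exact absurd (hφm.le_iff_le.mp this) (not_le.mpr hca)
  intro x
  by_cases hx : x ∈ U
  · have := hmin x hx; linarith
  · exact hc x hx
end

section
/- Euler–Lagrange equation for the resolvent: if u is the minimizer of the strictly convex functional E_f(v) = Q₀(v) + Σ_x Φ(f(x) − W(x)v(x)) m(x)/W(x) over its domain (with f finitely supported), then for every x ∈ X: Q(u, δ_x) = m(x) φ(f(x) − W(x)u(x)), equivalently ℒu(x) = φ(f(x) − W(x)u(x)). -/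
open Filter Topology
open scoped ENNReal

variable {X : Type*}

section Aux

lemma PhiFn_nonneg (φ : ℝ → ℝ) (hφm : Monotone φ) (hφ0 : φ 0 = 0) (s : ℝ) :
    0 ≤ PhiFn φ s := by
  rcases le_or_gt 0 s with h | h
  · refine intervalIntegral.integral_nonneg h fun t ht => ?_
    have := hφm ht.1
    rw [hφ0] at this
    linarith
  · rw [PhiFn, intervalIntegral.integral_symm]
    have h2 : (0:ℝ) ≤ ∫ t in s..(0:ℝ), -(2 * φ t) := by
      refine intervalIntegral.integral_nonneg h.le fun t ht => ?_
      have := hφm ht.2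
      rw [hφ0] at this
      linarith
    rw [intervalIntegral.integral_neg] at h2
    linarith

lemma PhiFn_hasDerivAt (φ : ℝ → ℝ) (hφc : Continuous φ) (s : ℝ) :
    HasDerivAt (PhiFn φ) (2 * φ s) s :=
  ((continuous_const.mul hφc).integral_hasStrictDerivAt 0 s).hasDerivAt

lemma summable_of_tsum_ofReal_ne_top {α : Type*} {g : α → ℝ} (hg : ∀ p, 0 ≤ g p)
    (h : (∑' p, ENNReal.ofReal (g p)) ≠ ⊤) : Summable g := by
  have h2 : Summable (fun p => (g p).toNNReal) := ENNReal.tsum_coe_ne_top_iff_summable.mp h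
  exact (NNReal.summable_coe.2 h2).congr fun p => Real.coe_toNNReal _ (hg p)

end Aux

theorem euler_lagrange_resolvent [Countable X] (b : X → X → ℝ)
    (hsym : ∀ x y, b x y = b y x) (hnn : ∀ x y, 0 ≤ b x y) (hdiag : ∀ x, b x x = 0)
    (hdeg : ∀ x, Summable fun y => b x y) (m : X → ℝ) (hm : ∀ x, 0 < m x)
    (φ : ℝ → ℝ) (hφm : StrictMono φ) (hφc : Continuous φ) (hφ0 : φ 0 = 0)
    (W : X → ℝ) (W0 : ℝ) (hW0 : 0 < W0) (hWb : ∀ x, W0 ≤ W x)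
    (f : X → ℝ) (hf : (Function.support f).Finite)
    (u : X → ℝ) (hu : Minimizes b m φ W f u) :
    ∀ x : X,
      energyBil b u (Set.indicator {x} fun _ => (1 : ℝ)) = m x * φ (f x - W x * u x) ∧
      formalLap b m u x = φ (f x - W x * u x) := by
  intro x
  classical
  set a : ℝ := f x - W x * u x with ha
  have hWx : (0:ℝ) < W x := lt_of_lt_of_le hW0 (hWb x)
  have hWxne : W x ≠ 0 := ne_of_gt hWx
  set d : X → ℝ := fun y => if y = x then 1 else 0 with hd
  have hdx : d x = 1 := by simp [hd]
  have hdne : ∀ y, y ≠ x → d y = 0 := fun y hy => by simp [hd, hy]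
  have hPhi0 : ∀ s, 0 ≤ PhiFn φ s := PhiFn_nonneg φ hφm.monotone hφ0
  -- E(0) is finite
  have hk0 : kappa φ W m f (0 : X → ℝ) ≠ ⊤ := by
    rw [kappa]
    have hz : ∀ y ∉ hf.toFinset,
        ENNReal.ofReal (PhiFn φ (f y - W y * (0:X→ℝ) y) * (m y / W y)) = 0 := by
      intro y hy
      have hfy : f y = 0 := by
        by_contra hne
        exact hy (hf.mem_toFinset.mpr hne)
      simp [hfy, PhiFn]
    rw [tsum_eq_sum hz]
    exact (ENNReal.sum_lt_top.mpr fun _ _ => ENNReal.ofReal_lt_top).ne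
  have hq00 : graphEnergy b (0:X→ℝ) = 0 := by simp [graphEnergy]
  have hMemD0_zero : MemD0 b (0 : X → ℝ) := by
    refine ⟨fun _ => 0, fun _ => by simp, fun y => by simpa using tendsto_const_nhds, ?_⟩
    simpa [hq00] using (tendsto_const_nhds : Filter.Tendsto (fun _ : ℕ => (0:ℝ≥0∞)) Filter.atTop (nhds 0))
  have hEu_le : Efun b m φ W f u ≤ Efun b m φ W f 0 := hu.2 0 ⟨hMemD0_zero, hk0⟩
  have hE0 : Efun b m φ W f 0 ≠ ⊤ := by
    rw [Efun]
    have hq0 : graphEnergy b (0:X→ℝ) = 0 := by simp [graphEnergy]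
    rw [hq0, zero_add]
    exact hk0
  have hQu_ne : graphEnergy b u ≠ ⊤ :=
    ne_top_of_le_ne_top hE0 (le_trans le_self_add hEu_le)
  -- summability of the energy terms
  have hQu_sum' : (∑' p : X × X, ENNReal.ofReal (b p.1 p.2 * (u p.1 - u p.2)^2)) ≠ ⊤ := by
    intro h
    apply hQu_ne
    rw [graphEnergy, h, ENNReal.mul_top (by norm_num)]
  have sA : Summable (fun p : X × X => b p.1 p.2 * (u p.1 - u p.2)^2) :=
    summable_of_tsum_ofReal_ne_top (fun p => mul_nonneg (hnn _ _) (sq_nonneg _)) hQu_sum'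
  have sC : Summable (fun p : X × X => b p.1 p.2 * (d p.1 - d p.2)^2) := by
    have h1 : Summable (fun p : X × X => if p.1 = x then b x p.2 else 0) := by
      refine (summable_prod_of_nonneg ?_).mpr ⟨?_, ?_⟩
      · intro p; dsimp only; split
        · exact hnn _ _
        · exact le_rfl
      · intro a'
        by_cases hax : a' = x
        · simpa [hax] using hdeg x
        · simpa [hax] using summable_zero
      · refine summable_of_ne_finset_zero (s := {x}) ?_
        intro a' hax
        simp only [Finset.mem_singleton] at hax
        simp [hax]
    have h2 : Summable (fun p : X × X => if p.2 = x then b p.1 x else 0) := by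
      refine (summable_prod_of_nonneg ?_).mpr ⟨?_, ?_⟩
      · intro p; dsimp only; split
        · exact hnn _ _
        · exact le_rfl
      · intro a'
        refine summable_of_ne_finset_zero (s := {x}) ?_
        intro y hy
        simp only [Finset.mem_singleton] at hy
        simp [hy]
      · refine (((hdeg x).congr fun a' => hsym x a').congr fun a' => ?_)
        exact (tsum_ite_eq x (fun _ => b a' x)).symm
    refine Summable.of_nonneg_of_le (fun p => mul_nonneg (hnn _ _) (sq_nonneg _)) ?_ (h1.add h2)
    rintro ⟨p1, p2⟩
    dsimp only
    by_cases h1x : p1 = x <;> by_cases h2x : p2 = x <;>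
      simp [hd, h1x, h2x, hdiag, hnn]
  have habs : ∀ (p : X × X), |b p.1 p.2 * (u p.1 - u p.2) * (d p.1 - d p.2)| ≤
      (b p.1 p.2 * (u p.1 - u p.2)^2 + b p.1 p.2 * (d p.1 - d p.2)^2) / 2 := by
    intro p
    have hb := hnn p.1 p.2
    have h1 : |(u p.1 - u p.2) * (d p.1 - d p.2)| ≤
        ((u p.1 - u p.2)^2 + (d p.1 - d p.2)^2) / 2 := by
      rw [abs_mul]
      nlinarith [sq_nonneg (|u p.1 - u p.2| - |d p.1 - d p.2|), sq_abs (u p.1 - u p.2),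
        sq_abs (d p.1 - d p.2), abs_nonneg (u p.1 - u p.2), abs_nonneg (d p.1 - d p.2)]
    calc |b p.1 p.2 * (u p.1 - u p.2) * (d p.1 - d p.2)|
        = b p.1 p.2 * |(u p.1 - u p.2) * (d p.1 - d p.2)| := by
          rw [mul_assoc, abs_mul, abs_of_nonneg hb]
      _ ≤ b p.1 p.2 * (((u p.1 - u p.2)^2 + (d p.1 - d p.2)^2) / 2) :=
          mul_le_mul_of_nonneg_left h1 hb
      _ = (b p.1 p.2 * (u p.1 - u p.2)^2 + b p.1 p.2 * (d p.1 - d p.2)^2) / 2 := by ring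
  have sB : Summable (fun p : X × X => b p.1 p.2 * (u p.1 - u p.2) * (d p.1 - d p.2)) := by
    apply Summable.of_abs
    exact Summable.of_nonneg_of_le (fun p => abs_nonneg _) habs ((sA.add sC).div_const 2)
  set Ar := ∑' p : X × X, b p.1 p.2 * (u p.1 - u p.2)^2 with hAr
  set Br := ∑' p : X × X, b p.1 p.2 * (u p.1 - u p.2) * (d p.1 - d p.2) with hBr
  set Cr := ∑' p : X × X, b p.1 p.2 * (d p.1 - d p.2)^2 with hCr
  have hexp : ∀ t : ℝ, ∀ p : X × X,
      b p.1 p.2 * ((u p.1 + t * d p.1) - (u p.2 + t * d p.2))^2 =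
      b p.1 p.2 * (u p.1 - u p.2)^2 + ((2*t) * (b p.1 p.2 * (u p.1 - u p.2) * (d p.1 - d p.2))
        + t^2 * (b p.1 p.2 * (d p.1 - d p.2)^2)) := by
    intro t p; ring
  have sV : ∀ t : ℝ, Summable (fun p : X × X =>
      b p.1 p.2 * ((u p.1 + t * d p.1) - (u p.2 + t * d p.2))^2) := fun t =>
    (sA.add ((sB.mul_left (2*t)).add (sC.mul_left (t^2)))).congr (fun p => (hexp t p).symm)
  have hVsum : ∀ t : ℝ, (∑' p : X × X,
      b p.1 p.2 * ((u p.1 + t * d p.1) - (u p.2 + t * d p.2))^2)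
      = Ar + (2*t*Br + t^2*Cr) := by
    intro t
    rw [tsum_congr (hexp t), Summable.tsum_add sA ((sB.mul_left (2*t)).add (sC.mul_left (t^2))),
      Summable.tsum_add (sB.mul_left (2*t)) (sC.mul_left (t^2)), tsum_mul_left, tsum_mul_left]
  have hGq_nonneg : ∀ t : ℝ, 0 ≤ Ar + (2*t*Br + t^2*Cr) := by
    intro t
    rw [← hVsum t]
    exact tsum_nonneg fun p => mul_nonneg (hnn _ _) (sq_nonneg _)
  have hhalf : (1/2 : ℝ≥0∞) = ENNReal.ofReal (1/2) := by
    rw [ENNReal.ofReal_div_of_pos (by norm_num)]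
    norm_num
  have hQv : ∀ t : ℝ, graphEnergy b (fun y => u y + t * d y) =
      ENNReal.ofReal ((1/2) * (Ar + (2*t*Br + t^2*Cr))) := by
    intro t
    rw [graphEnergy]
    beta_reduce
    rw [← ENNReal.ofReal_tsum_of_nonneg (fun p => mul_nonneg (hnn _ _) (sq_nonneg _)) (sV t),
      hVsum t, ENNReal.ofReal_mul (by norm_num : (0:ℝ) ≤ 1/2), hhalf]
  -- kappa decomposition
  set S := ∑' y, (if y = x then 0
      else ENNReal.ofReal (PhiFn φ (f y - W y * u y) * (m y / W y))) with hSdef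
  have hS_ne : S ≠ ⊤ := by
    refine ne_top_of_le_ne_top hu.1.2 ?_
    rw [hSdef, kappa]
    refine ENNReal.tsum_le_tsum fun y => ?_
    by_cases hy : y = x <;> simp [hy]
  have hkv : ∀ t : ℝ, kappa φ W m f (fun y => u y + t * d y) =
      ENNReal.ofReal (PhiFn φ (a - t * W x) * (m x / W x)) + S := by
    intro t
    rw [kappa, ENNReal.tsum_eq_add_tsum_ite x]
    beta_reduce
    congr 1
    · have harg : f x - W x * (u x + t * d x) = a - t * W x := by rw [hdx, ha]; ring
      rw [harg]
    · rw [hSdef]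
      refine tsum_congr fun y => ?_
      by_cases hy : y = x
      · simp [hy]
      · simp [hy, hdne y hy]
  have hPhiv_nonneg : ∀ t : ℝ, 0 ≤ PhiFn φ (a - t * W x) * (m x / W x) := fun t =>
    mul_nonneg (hPhi0 _) (div_nonneg (hm x).le hWx.le)
  have hE : ∀ t : ℝ, Efun b m φ W f (fun y => u y + t * d y) =
      ENNReal.ofReal ((1/2) * (Ar + (2*t*Br + t^2*Cr)) + PhiFn φ (a - t * W x) * (m x / W x))
        + S := by
    intro t
    rw [Efun, hQv t, hkv t, ← add_assoc,
      ← ENNReal.ofReal_add (mul_nonneg (by norm_num) (hGq_nonneg t)) (hPhiv_nonneg t)]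
  have hv0 : (fun y => u y + (0:ℝ) * d y) = u := by funext y; ring
  -- EDom of the perturbed functions
  obtain ⟨⟨g, hgfin, hgpt, hgE⟩, hku_ne⟩ := hu.1
  have hEDomv : ∀ t : ℝ, EDom b m φ W f (fun y => u y + t * d y) := by
    intro t
    refine ⟨⟨fun n y => g n y + t * d y, ?_, ?_, ?_⟩, ?_⟩
    · intro n
      refine Set.Finite.subset ((hgfin n).union (Set.finite_singleton x)) ?_
      intro y hy
      simp only [Function.mem_support] at hy
      by_cases hyx : y = x
      · exact Or.inr hyx
      · left
        simp only [Function.mem_support]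
        intro h0
        apply hy
        rw [h0, hdne y hyx]
        ring
    · intro y
      exact (hgpt y).add tendsto_const_nhds
    · have heq : ∀ n : ℕ, ((fun y => u y + t * d y) - fun y => g n y + t * d y) = u - g n := by
        intro n; funext y; simp only [Pi.sub_apply]; ring
      have := hgE
      refine this.congr fun n => ?_
      rw [heq n]
    · rw [hkv t]
      exact ENNReal.add_ne_top.mpr ⟨ENNReal.ofReal_ne_top, hS_ne⟩
  -- the real variational inequality
  have hmin : ∀ t : ℝ,
      (1/2) * (Ar + (2*(0:ℝ)*Br + (0:ℝ)^2*Cr)) + PhiFn φ (a - 0 * W x) * (m x / W x) ≤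
      (1/2) * (Ar + (2*t*Br + t^2*Cr)) + PhiFn φ (a - t * W x) * (m x / W x) := by
    intro t
    have h1 := hu.2 _ (hEDomv t)
    rw [hE t] at h1
    have h0 : Efun b m φ W f u =
        ENNReal.ofReal ((1/2) * (Ar + (2*(0:ℝ)*Br + (0:ℝ)^2*Cr))
          + PhiFn φ (a - 0 * W x) * (m x / W x)) + S := by
      rw [← hv0]
      exact hE 0
    rw [h0] at h1
    have h3 := (ENNReal.add_le_add_iff_right hS_ne).mp h1
    exact (ENNReal.ofReal_le_ofReal_iff
      (add_nonneg (mul_nonneg (by norm_num) (hGq_nonneg t)) (hPhiv_nonneg t))).mp h3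
  set G : ℝ → ℝ := fun t => (1/2) * (Ar + (2*t*Br + t^2*Cr))
      + PhiFn φ (a - t * W x) * (m x / W x) with hGdef
  have hlocmin : IsLocalMin G 0 := by
    refine Filter.Eventually.of_forall fun t => ?_
    simp only [hGdef]
    exact hmin t
  have hderiv : HasDerivAt G (Br - 2 * φ a * m x) 0 := by
    have hA : HasDerivAt (fun _ : ℝ => Ar) 0 0 := hasDerivAt_const _ _
    have hBt : HasDerivAt (fun t : ℝ => 2*t*Br) (2*Br) 0 := by
      have := ((hasDerivAt_id (0:ℝ)).const_mul 2).mul_const Br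
      simpa using this
    have hCt : HasDerivAt (fun t : ℝ => t^2*Cr) 0 0 := by
      have := (hasDerivAt_pow 2 (0:ℝ)).mul_const Cr
      simpa using this
    have h1 : HasDerivAt (fun t : ℝ => (1/2) * (Ar + (2*t*Br + t^2*Cr)))
        ((1/2) * (0 + (2*Br + 0))) 0 := (hA.add (hBt.add hCt)).const_mul (1/2)
    have hinner : HasDerivAt (fun t : ℝ => a - t * W x) (-(1 * W x)) 0 :=
      ((hasDerivAt_id (0:ℝ)).mul_const (W x)).const_sub a
    have h2 : HasDerivAt (fun t : ℝ => PhiFn φ (a - t * W x) * (m x / W x))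
        (2 * φ ((fun t : ℝ => a - t * W x) 0) * (-(1 * W x)) * (m x / W x)) 0 :=
      (HasDerivAt.comp (0:ℝ) (PhiFn_hasDerivAt φ hφc _) hinner).mul_const _
    have hsum := h1.add h2
    rw [hGdef]
    refine hsum.congr_deriv ?_
    symm
    beta_reduce
    rw [zero_mul, sub_zero]
    field_simp
    ring
  have hEL : Br - 2 * φ a * m x = 0 := hlocmin.hasDerivAt_eq_zero hderiv
  -- identify Br with the row sum
  have hrow : Summable (fun y => b x y * (u x - u y)) := by
    apply Summable.of_abs
    refine Summable.of_nonneg_of_le (fun y => abs_nonneg _) ?_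
      (((sA.prod_factor x).add (hdeg x)).div_const 2)
    intro y
    dsimp only
    have h1 := hnn x y
    rw [abs_mul, abs_of_nonneg h1]
    nlinarith [mul_nonneg h1 (sq_nonneg (|u x - u y| - 1)), sq_abs (u x - u y),
      abs_nonneg (u x - u y)]
  set L := ∑' y, b x y * (u x - u y) with hLdef
  have hBL : Br = 2 * L := by
    rw [hBr, Summable.tsum_prod sB]
    dsimp only
    have hinner : ∀ a' : X, (∑' y, b a' y * (u a' - u y) * (d a' - d y))
        = (if a' = x then L else 0) + b a' x * (u x - u a') := by
      intro a'
      by_cases hax : a' = x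
      · subst hax
        rw [if_pos rfl]
        have hcong : ∀ y, b a' y * (u a' - u y) * (d a' - d y) = b a' y * (u a' - u y) := by
          intro y
          by_cases hyx : y = a'
          · subst hyx; simp
          · rw [hdx, hdne y hyx]
            ring
        rw [tsum_congr hcong, ← hLdef]
        simp
      · rw [if_neg hax, zero_add]
        have hcong : ∀ y, b a' y * (u a' - u y) * (d a' - d y)
            = (if y = x then b a' x * (u x - u a') else 0) := by
          intro y
          by_cases hyx : y = x
          · subst hyx
            rw [if_pos rfl, hdx, hdne a' hax]
            ring
          · rw [if_neg hyx, hdne y hyx, hdne a' hax]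
            ring
        rw [tsum_congr hcong, tsum_ite_eq]
    rw [tsum_congr hinner]
    have s1 : Summable (fun a' : X => if a' = x then L else 0) := by
      refine summable_of_ne_finset_zero (s := {x}) ?_
      intro a' h
      simp only [Finset.mem_singleton] at h
      simp [h]
    have s2 : Summable (fun a' : X => b a' x * (u x - u a')) :=
      hrow.congr fun y => by rw [hsym x y]
    rw [Summable.tsum_add s1 s2, tsum_ite_eq]
    have : (∑' a' : X, b a' x * (u x - u a')) = L := by
      rw [hLdef]
      exact tsum_congr fun a' => by rw [hsym a' x]
    rw [this]
    ring
  have hLval : L = m x * φ a := by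
    rw [hBL] at hEL
    linarith
  constructor
  · have hδ : (Set.indicator {x} fun _ => (1:ℝ)) = d := by
      funext y
      simp [hd, Set.indicator_apply]
    rw [hδ, energyBil, ← hBr, hBL, hLval]
    ring
  · rw [formalLap, ← hLdef, hLval, mul_comm, mul_div_assoc, div_self (hm x).ne', mul_one]
end

section
/- Positivity on finite sets: if U ⊆ X is finite and f ≥ 0 is finitely supported, then the Dirichlet resolvent R_U f on U (the unique function vanishing outside U and satisfying φ⁻¹(ℒ R_U f) + W·R_U f = f on U) is nonnegative. -/
open Filter Topology
open scoped ENNReal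

variable {X : Type*}

theorem dirichlet_resolvent_nonneg_on_finite [Countable X] (b : X → X → ℝ)
    (hsym : ∀ x y, b x y = b y x) (hnn : ∀ x y, 0 ≤ b x y) (hdiag : ∀ x, b x x = 0)
    (hdeg : ∀ x, Summable fun y => b x y) (m : X → ℝ) (hm : ∀ x, 0 < m x)
    (φ : ℝ → ℝ) (hφm : StrictMono φ) (hφc : Continuous φ) (hφ0 : φ 0 = 0)
    (W : X → ℝ) (W0 : ℝ) (hW0 : 0 < W0) (hWb : ∀ x, W0 ≤ W x)
    (U : Set X) (hU : U.Finite)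
    (f : X → ℝ) (hf : (Function.support f).Finite) (hf0 : 0 ≤ f)
    (u : X → ℝ)
    (hu : ∀ x, Summable fun y => b x y * |u y|)
    (huφ : ∀ x ∈ U, formalLap b m u x ∈ Set.range φ)
    (heq : ∀ x ∈ U, Function.invFun φ (formalLap b m u x) + W x * u x = f x)
    (hout : ∀ x ∉ U, u x = 0) :
    ∀ x, 0 ≤ u x := by
  by_contra hcon
  push_neg at hcon
  obtain ⟨x, hx⟩ := hcon
  have hxU : x ∈ U := by
    by_contra h
    rw [hout x h] at hx
    exact lt_irrefl 0 hx
  obtain ⟨x₀, hx₀U, hx₀min⟩ := Set.exists_min_image U u hU ⟨x, hxU⟩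
  have hx₀neg : u x₀ < 0 := lt_of_le_of_lt (hx₀min x hxU) hx
  have hglob : ∀ y, u x₀ ≤ u y := by
    intro y
    by_cases hy : y ∈ U
    · exact hx₀min y hy
    · rw [hout y hy]; exact hx₀neg.le
  have hlap : formalLap b m u x₀ ≤ 0 := by
    unfold formalLap
    apply div_nonpos_of_nonpos_of_nonneg _ (hm x₀).le
    apply tsum_nonpos
    intro y
    exact mul_nonpos_of_nonneg_of_nonpos (hnn x₀ y) (by linarith [hglob y])
  obtain ⟨t, ht⟩ := huφ x₀ hx₀U
  have hinv : Function.invFun φ (formalLap b m u x₀) = t := by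
    rw [← ht, Function.leftInverse_invFun hφm.injective t]
  have ht0 : t ≤ 0 := by
    by_contra h
    push_neg at h
    have := hφm h
    rw [hφ0, ht] at this
    linarith
  have hW : 0 < W x₀ := lt_of_lt_of_le hW0 (hWb x₀)
  have hWu : W x₀ * u x₀ < 0 := mul_neg_of_pos_of_neg hW hx₀neg
  have := heq x₀ hx₀U
  rw [hinv] at this
  have hfx : (0:ℝ) ≤ f x₀ := hf0 x₀
  linarith
end

section
/- Domain monotonicity: if U ⊆ V ⊆ X are finite sets and 0 ≤ f ≤ g are finitely supported functions, then R_U f ≤ R_V g pointwise, where R_U f and R_V g are the Dirichlet resolvents on U and V respectively. -/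
open Filter Topology
open scoped ENNReal

variable {X : Type*}

theorem domain_monotonicity [Countable X] (b : X → X → ℝ)
    (hsym : ∀ x y, b x y = b y x) (hnn : ∀ x y, 0 ≤ b x y) (hdiag : ∀ x, b x x = 0)
    (hdeg : ∀ x, Summable fun y => b x y) (m : X → ℝ) (hm : ∀ x, 0 < m x)
    (φ : ℝ → ℝ) (hφm : StrictMono φ) (hφc : Continuous φ) (hφ0 : φ 0 = 0)
    (W : X → ℝ) (W0 : ℝ) (hW0 : 0 < W0) (hWb : ∀ x, W0 ≤ W x)
    (U V : Set X) (hU : U.Finite) (hV : V.Finite) (hUV : U ⊆ V)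
    (f g : X → ℝ) (hfs : (Function.support f).Finite) (hgs : (Function.support g).Finite)
    (hf0 : 0 ≤ f) (hfg : f ≤ g)
    (u v : X → ℝ)
    (hu : ∀ x, Summable fun y => b x y * |u y|)
    (hv : ∀ x, Summable fun y => b x y * |v y|)
    (huφ : ∀ x ∈ U, formalLap b m u x ∈ Set.range φ)
    (hvφ : ∀ x ∈ V, formalLap b m v x ∈ Set.range φ)
    (hueq : ∀ x ∈ U, Function.invFun φ (formalLap b m u x) + W x * u x = f x)
    (hveq : ∀ x ∈ V, Function.invFun φ (formalLap b m v x) + W x * v x = g x)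
    (huout : ∀ x ∉ U, u x = 0) (hvout : ∀ x ∉ V, v x = 0) :
    ∀ x, u x ≤ v x := by
  have hinj : Function.Injective φ := hφm.injective
  have hinv : ∀ s, Function.invFun φ (φ s) = s :=
    fun s => Function.leftInverse_invFun hinj s
  -- summability of Laplacian terms
  have hsum : ∀ (w : X → ℝ), (∀ x, Summable fun y => b x y * |w y|) →
      ∀ x, Summable fun y => b x y * (w x - w y) := by
    intro w hw x
    have h1 : Summable fun y => b x y * w x := (hdeg x).mul_right _
    have h2 : Summable fun y => b x y * w y := by
      refine Summable.of_abs ((hw x).congr fun y => ?_)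
      rw [abs_mul, abs_of_nonneg (hnn x y)]
    simpa [mul_sub] using h1.sub h2
  have hsumu := hsum u hu
  have hsumv := hsum v hv
  -- v is nonnegative
  have hv0 : ∀ x, 0 ≤ v x := by
    by_contra hc
    push_neg at hc
    obtain ⟨y, hy⟩ := hc
    have hyV : y ∈ V := by
      by_contra h; rw [hvout y h] at hy; exact lt_irrefl 0 hy
    obtain ⟨y0, hy0V, hmin⟩ := Set.exists_min_image V v hV ⟨y, hyV⟩
    have hy0neg : v y0 < 0 := lt_of_le_of_lt (hmin y hyV) hy
    have hall : ∀ z, v y0 ≤ v z := by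
      intro z
      by_cases hz : z ∈ V
      · exact hmin z hz
      · rw [hvout z hz]; exact le_of_lt hy0neg
    have hlap : formalLap b m v y0 ≤ 0 := by
      have ht : (∑' z, b y0 z * (v y0 - v z)) ≤ 0 :=
        tsum_nonpos fun z => mul_nonpos_of_nonneg_of_nonpos (hnn y0 z)
          (by linarith [hall z])
      exact div_nonpos_of_nonpos_of_nonneg ht (le_of_lt (hm y0))
    obtain ⟨t, ht⟩ := hvφ y0 hy0V
    have htle : t ≤ 0 := by
      have : φ t ≤ φ 0 := by rw [hφ0, ht]; exact hlap
      exact hφm.le_iff_le.mp this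
    have heq := hveq y0 hy0V
    rw [← ht, hinv] at heq
    have hWpos : 0 < W y0 := lt_of_lt_of_le hW0 (hWb y0)
    have hWv : W y0 * v y0 < 0 := mul_neg_of_pos_of_neg hWpos hy0neg
    have hg0 : 0 ≤ g y0 := le_trans (hf0 y0) (hfg y0)
    linarith
  -- main comparison
  by_contra hc
  push_neg at hc
  obtain ⟨x, hx⟩ := hc
  have hxpos : 0 < u x := lt_of_le_of_lt (hv0 x) hx
  have hxU : x ∈ U := by
    by_contra h; rw [huout x h] at hxpos; exact lt_irrefl 0 hxpos
  obtain ⟨x0, hx0V, hmax⟩ := Set.exists_max_image V (fun z => u z - v z) hV ⟨x, hUV hxU⟩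
  have hM : 0 < u x0 - v x0 := lt_of_lt_of_le (by linarith) (hmax x (hUV hxU))
  have hall : ∀ z, u z - v z ≤ u x0 - v x0 := by
    intro z
    by_cases hz : z ∈ V
    · exact hmax z hz
    · have hzU : z ∉ U := fun h => hz (hUV h)
      rw [huout z hzU, hvout z hz]; linarith
  have hx0U : x0 ∈ U := by
    by_contra h
    rw [huout x0 h] at hM
    linarith [hv0 x0]
  have hlap : formalLap b m v x0 ≤ formalLap b m u x0 := by
    have ht : (∑' z, b x0 z * (v x0 - v z)) ≤ ∑' z, b x0 z * (u x0 - u z) :=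
      Summable.tsum_le_tsum (fun z => mul_le_mul_of_nonneg_left (by linarith [hall z]) (hnn x0 z))
        (hsumv x0) (hsumu x0)
    exact div_le_div_of_nonneg_right ht (hm x0).le
  obtain ⟨s, hs⟩ := huφ x0 hx0U
  obtain ⟨t, ht⟩ := hvφ x0 hx0V
  have hts : t ≤ s := hφm.le_iff_le.mp (by rw [hs, ht]; exact hlap)
  have hequ := hueq x0 hx0U
  have heqv := hveq x0 hx0V
  rw [← hs, hinv] at hequ
  rw [← ht, hinv] at heqv
  have hWpos : 0 < W x0 := lt_of_lt_of_le hW0 (hWb x0)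
  have : W x0 * v x0 < W x0 * u x0 :=
    mul_lt_mul_of_pos_left (by linarith) hWpos
  linarith [hfg x0]
end

section
/- Existence of a potential ensuring semi-linear stochastic completeness at infinity: Let b be any weighted graph over (X,m) and φ: ℝ → ℝ strictly increasing continuous with φ(0)=0, lim_{t→∞} φ(t) = ∞, and such that for each 0 < α ≤ 1 there is C_α > 0 with φ(αt) ≥ C_α φ(t) for all t ≥ 0. Then there exists W: X → (0,∞) with inf W > 0 such that every bounded g ≤ 0 in F_φ with φ⁻¹(ℒg) + Wg ≥ 0 vanishes identically; in fact W = φ⁻¹ ∘ (deg/m) + 1 works. -/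
open Filter Topology
open scoped ENNReal

variable {X : Type*}

lemma phi_surj_nonneg (φ : ℝ → ℝ) (hφm : StrictMono φ) (hφc : Continuous φ) (hφ0 : φ 0 = 0)
    (htop : Tendsto φ atTop atTop) (c : ℝ) (hc : 0 ≤ c) : ∃ w, 0 ≤ w ∧ φ w = c := by
  obtain ⟨t, ht⟩ := (htop.eventually_ge_atTop c).exists
  have ht' : c ≤ φ (max t 0) := le_trans ht (hφm.monotone (le_max_left _ _))
  have h0 : (0:ℝ) ≤ max t 0 := le_max_right _ _
  have hiv := intermediate_value_Icc h0 hφc.continuousOn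
  have hmem : c ∈ Set.Icc (φ 0) (φ (max t 0)) := ⟨hφ0.le.trans hc, ht'⟩
  obtain ⟨w, hw, hweq⟩ := hiv hmem
  exact ⟨w, hw.1, hweq⟩

theorem exists_potential_liouville [Countable X] (b : X → X → ℝ)
    (hsym : ∀ x y, b x y = b y x) (hnn : ∀ x y, 0 ≤ b x y) (hdiag : ∀ x, b x x = 0)
    (hdeg : ∀ x, Summable fun y => b x y) (m : X → ℝ) (hm : ∀ x, 0 < m x)
    (φ : ℝ → ℝ) (hφm : StrictMono φ) (hφc : Continuous φ) (hφ0 : φ 0 = 0)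
    (htop : Tendsto φ atTop atTop)
    (hhom : ∀ α : ℝ, 0 < α → α ≤ 1 → ∃ Cα > 0, ∀ t : ℝ, 0 ≤ t → Cα * φ t ≤ φ (α * t)) :
    ∃ W : X → ℝ, (∃ ε > 0, ∀ x, ε ≤ W x) ∧
      ∀ g : X → ℝ, (∃ Cg : ℝ, ∀ x, |g x| ≤ Cg) → g ≤ 0 →
        (∀ x, Summable fun y => b x y * |g y|) →
        (∀ x, formalLap b m g x ∈ Set.range φ) →
        (∀ x, 0 ≤ Function.invFun φ (formalLap b m g x) + W x * g x) → g = 0 :=  by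
  classical
  set D : X → ℝ := fun x => (∑' y, b x y) / m x with hD
  have hDnn : ∀ x, 0 ≤ D x := fun x => div_nonneg (tsum_nonneg fun y => hnn x y) (hm x).le
  have hWex : ∀ x : X, ∃ w, 0 ≤ w ∧ φ w = max (D x) 1 := fun x =>
    phi_surj_nonneg φ hφm hφc hφ0 htop _ (le_trans zero_le_one (le_max_right _ _))
  set W : X → ℝ := fun x => (hWex x).choose with hWdef
  have hWnn : ∀ x, 0 ≤ W x := fun x => (hWex x).choose_spec.1
  have hWeq : ∀ x, φ (W x) = max (D x) 1 := fun x => (hWex x).choose_spec.2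
  obtain ⟨w₀, hw₀nn, hw₀⟩ := phi_surj_nonneg φ hφm hφc hφ0 htop 1 zero_le_one
  have hw₀pos : 0 < w₀ := by
    rcases lt_or_ge 0 w₀ with h | h
    · exact h
    · have := hφm.monotone h
      rw [hφ0, hw₀] at this; linarith
  have hWlb : ∀ x, w₀ ≤ W x := fun x =>
    hφm.le_iff_le.mp (by rw [hWeq, hw₀]; exact le_max_right _ _)
  refine ⟨W, ⟨w₀, hw₀pos, hWlb⟩, ?_⟩
  rintro g ⟨Cg, hCg⟩ hgle hsum hrange hsup
  by_contra hg
  obtain ⟨x₀, hx₀⟩ : ∃ x, g x ≠ 0 := Function.ne_iff.mp hg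
  have hx₀neg : g x₀ < 0 := lt_of_le_of_ne (hgle x₀) hx₀
  set S : ℝ := sSup (Set.range fun x => -g x) with hSdef
  have hbdd : BddAbove (Set.range fun x => -g x) := by
    refine ⟨Cg, ?_⟩
    rintro _ ⟨x, rfl⟩
    exact le_trans (neg_le_abs _) (hCg x)
  have hne : (Set.range fun x => -g x).Nonempty := ⟨-g x₀, x₀, rfl⟩
  have hSpos : 0 < S := by
    have h0 : (0:ℝ) < -g x₀ := by linarith
    have h1 : -g x₀ ≤ S := le_csSup hbdd ⟨x₀, rfl⟩
    linarith
  have hgS : ∀ x, -g x ≤ S := fun x => le_csSup hbdd ⟨x, rfl⟩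
  set α : ℝ := min S 1 / 2 with hαdef
  have hα0 : 0 < α := by positivity
  have hα1 : α ≤ 1 := by
    have : min S 1 ≤ 1 := min_le_right _ _
    simp only [hαdef]; linarith
  have hαS : α < S := by
    have : min S 1 ≤ S := min_le_left _ _
    simp only [hαdef]; linarith
  obtain ⟨C, hC0, hCspec⟩ := hhom α hα0 hα1
  set ε : ℝ := min C (S - α) / 2 with hεdef
  have hε0 : 0 < ε := by
    have h1 : 0 < min C (S - α) := lt_min hC0 (by linarith)
    simp only [hεdef]; linarith
  have hεC : ε < C := by
    have : min C (S - α) ≤ C := min_le_left _ _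
    simp only [hεdef]; linarith
  have hεS : ε < S - α := by
    have : min C (S - α) ≤ S - α := min_le_right _ _
    simp only [hεdef]; linarith
  obtain ⟨_, ⟨x, rfl⟩, hx⟩ := exists_lt_of_lt_csSup hne (show S - ε < S by linarith)
  have hx' : S - ε < -g x := hx
  have hs1 : Summable fun y => b x y * g y := by
    apply Summable.of_abs
    have heq : (fun y => |b x y * g y|) = fun y => b x y * |g y| :=
      funext fun y => by rw [abs_mul, abs_of_nonneg (hnn x y)]
    rw [heq]; exact hsum x
  have hs2 : Summable fun y => b x y * (g x - g y) := by
    have heq : (fun y => b x y * (g x - g y)) = fun y => g x * b x y - b x y * g y :=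
      funext fun y => by ring
    rw [heq]; exact ((hdeg x).mul_left _).sub hs1
  have hpt : ∀ y, b x y * (g x - g y) ≤ b x y * ε := fun y => by
    have h1 : -g y ≤ S := hgS y
    exact mul_le_mul_of_nonneg_left (by linarith) (hnn x y)
  have htle : (∑' y, b x y * (g x - g y)) ≤ (∑' y, b x y) * ε := by
    calc (∑' y, b x y * (g x - g y)) ≤ ∑' y, b x y * ε :=
          Summable.tsum_le_tsum hpt hs2 ((hdeg x).mul_right ε)
      _ = (∑' y, b x y) * ε := tsum_mul_right
  have hLap : formalLap b m g x ≤ ε * D x := by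
    have h1 : formalLap b m g x ≤ ((∑' y, b x y) * ε) / m x :=
      (div_le_div_iff_of_pos_right (hm x)).mpr htle
    calc formalLap b m g x ≤ ((∑' y, b x y) * ε) / m x := h1
      _ = ε * D x := by rw [hD]; ring
  have h1 : W x * (-g x) ≤ Function.invFun φ (formalLap b m g x) := by
    have h2 := hsup x
    have h3 : W x * (-g x) = -(W x * g x) := by ring
    linarith
  have h2 : φ (W x * (-g x)) ≤ formalLap b m g x := by
    have heq := Function.invFun_eq (hrange x)
    calc φ (W x * (-g x)) ≤ φ (Function.invFun φ (formalLap b m g x)) := hφm.monotone h1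
      _ = formalLap b m g x := heq
  have h3 : φ (α * W x) ≤ φ (W x * (-g x)) := by
    apply hφm.monotone
    calc α * W x ≤ (-g x) * W x := mul_le_mul_of_nonneg_right (by linarith) (hWnn x)
      _ = W x * (-g x) := mul_comm _ _
  have h4 : C * φ (W x) ≤ φ (α * W x) := hCspec (W x) (hWnn x)
  have hM : (1:ℝ) ≤ max (D x) 1 := le_max_right _ _
  have hDM : D x ≤ max (D x) 1 := le_max_left _ _
  have hchain : C * max (D x) 1 ≤ ε * max (D x) 1 := by
    have h5 : C * max (D x) 1 ≤ formalLap b m g x := by rw [← hWeq x]; linarith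
    nlinarith [hε0.le]
  nlinarith
end
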